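/- arXiv:1402.1559 — 5 statements merged into one kernel-verified Lean document; each statement's English description precedes it below -/
import Mathlib

section
/- Let F be a p×k complex matrix, G a q×k complex matrix, γ > 0 a real number, and G_o an invertible k×k complex matrix satisfying G_oᴴG_o = γ²·I − GᴴG. If the spectral norm of the stacked matrix [F; G] satisfies ‖[F; G]‖ < γ, then ‖G‖ < γ and ‖F·G_o⁻¹‖ < 1. -/
open Matrix
open scoped Matrix.Norms.L2Operator

noncomputable def specNorm {m n : Type*} [Fintype m] [Fintype n] [DecidableEq n]
    (M : Matrix m n ℂ) : ℝ :=
  ‖LinearMap.toContinuousLinearMap (Matrix.toEuclideanLin M)‖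

section Aux
variable {m n k : Type*} [Fintype m] [Fintype n] [DecidableEq n] [DecidableEq m] [Fintype k] [DecidableEq k]

private lemma specNorm_eq_norm' (M : Matrix m n ℂ) : specNorm M = ‖M‖ := rfl

private lemma apply_le' (M : Matrix m n ℂ) (x : EuclideanSpace ℂ n) :
    ‖toEuclideanLin M x‖ ≤ ‖M‖ * ‖x‖ := by
  exact (LinearMap.toContinuousLinearMap (toEuclideanLin M)).le_opNorm x

private lemma norm_le_bound' (M : Matrix m n ℂ) {c : ℝ} (hc : 0 ≤ c)
    (h : ∀ x : EuclideanSpace ℂ n, ‖toEuclideanLin M x‖ ≤ c * ‖x‖) : ‖M‖ ≤ c :=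
  ContinuousLinearMap.opNorm_le_bound _ hc fun x => by simpa using h x

private lemma sq_norm_euc' (w : EuclideanSpace ℂ m) : ‖w‖ ^ 2 = ∑ i, ‖w i‖ ^ 2 := by
  rw [EuclideanSpace.norm_eq, Real.sq_sqrt]; positivity

private lemma sq_norm_fromRows' (F : Matrix m n ℂ) (G : Matrix k n ℂ) (x : EuclideanSpace ℂ n) :
    ‖toEuclideanLin (fromRows F G) x‖ ^ 2
      = ‖toEuclideanLin F x‖ ^ 2 + ‖toEuclideanLin G x‖ ^ 2 := by
  simp only [sq_norm_euc', Fintype.sum_sum_type]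
  congr 1 <;> refine Finset.sum_congr rfl fun i _ => by
    simp [toEuclideanLin_apply, fromRows_mulVec]

private lemma tel_mul' (A : Matrix m n ℂ) (B : Matrix n k ℂ) (x : EuclideanSpace ℂ k) :
    toEuclideanLin (A * B) x = toEuclideanLin A (toEuclideanLin B x) := by
  simp [toEuclideanLin_apply, mulVec_mulVec]

private lemma tel_one' (x : EuclideanSpace ℂ n) : toEuclideanLin (1 : Matrix n n ℂ) x = x := by
  simp [toEuclideanLin_apply]

private lemma sq_norm_via_adjoint' (A : Matrix m n ℂ) (x : EuclideanSpace ℂ n) :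
    (inner ℂ x (toEuclideanLin (Aᴴ * A) x) : ℂ) = (‖toEuclideanLin A x‖ ^ 2 : ℝ) := by
  rw [tel_mul', Matrix.toEuclideanLin_conjTranspose_eq_adjoint,
    LinearMap.adjoint_inner_right, inner_self_eq_norm_sq_to_K]
  norm_cast

private lemma sq_norm_Go' (G : Matrix m n ℂ) (Go : Matrix n n ℂ) (γ : ℝ)
    (hfact : Goᴴ * Go = ((γ : ℂ) ^ 2) • (1 : Matrix n n ℂ) - Gᴴ * G)
    (x : EuclideanSpace ℂ n) :
    ‖toEuclideanLin Go x‖ ^ 2 = γ ^ 2 * ‖x‖ ^ 2 - ‖toEuclideanLin G x‖ ^ 2 := by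
  have h1 := sq_norm_via_adjoint' Go x
  have h2 := sq_norm_via_adjoint' G x
  rw [hfact] at h1
  have hexp : (inner ℂ x (toEuclideanLin (((γ : ℂ) ^ 2) • (1 : Matrix n n ℂ) - Gᴴ * G) x) : ℂ)
      = (γ : ℂ) ^ 2 * ((‖x‖ ^ 2 : ℝ) : ℂ) - ((‖toEuclideanLin G x‖ ^ 2 : ℝ) : ℂ) := by
    rw [map_sub, LinearEquiv.map_smul, LinearMap.sub_apply, LinearMap.smul_apply,
      inner_sub_right, inner_smul_right, tel_one', h2,
      @inner_self_eq_norm_sq_to_K ℂ]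
    norm_num
  rw [hexp] at h1
  have h3 : ((γ ^ 2 * ‖x‖ ^ 2 - ‖toEuclideanLin G x‖ ^ 2 : ℝ) : ℂ)
      = ((‖toEuclideanLin Go x‖ ^ 2 : ℝ) : ℂ) := by rw [← h1]; push_cast; ring
  exact (Complex.ofReal_inj.mp h3).symm

end Aux

/-- If `‖[F; G]‖ < γ` and `G_oᴴ G_o = γ²·I − Gᴴ G` with `G_o` invertible,
then `‖G‖ < γ` and `‖F G_o⁻¹‖ < 1`. -/
theorem specNorm_stacked_lt_imp (p q k : ℕ)
    (F : Matrix (Fin p) (Fin k) ℂ) (G : Matrix (Fin q) (Fin k) ℂ)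
    (γ : ℝ) (hγ : 0 < γ)
    (Go : Matrix (Fin k) (Fin k) ℂ) (hGo : IsUnit Go)
    (hfact : Goᴴ * Go = ((γ : ℂ) ^ 2) • (1 : Matrix (Fin k) (Fin k) ℂ) - Gᴴ * G)
    (h : specNorm (Matrix.fromRows F G) < γ) :
    specNorm G < γ ∧ specNorm (F * Go⁻¹) < 1 := by
  rw [specNorm_eq_norm'] at h ⊢
  rw [show specNorm (F * Go⁻¹) = ‖F * Go⁻¹‖ from rfl]
  set N : ℝ := ‖fromRows F G‖ with hN
  have hN0 : (0 : ℝ) ≤ N := norm_nonneg _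
  -- pointwise square bound
  have key : ∀ x : EuclideanSpace ℂ (Fin k),
      ‖toEuclideanLin F x‖ ^ 2 + ‖toEuclideanLin G x‖ ^ 2 ≤ N ^ 2 * ‖x‖ ^ 2 := by
    intro x
    have h1 := apply_le' (fromRows F G) x
    have h2 := sq_norm_fromRows' F G x
    nlinarith [norm_nonneg (toEuclideanLin (fromRows F G) x), norm_nonneg x]
  constructor
  · refine lt_of_le_of_lt (norm_le_bound' G hN0 fun x => ?_) h
    have := key x
    have hFx := sq_nonneg ‖toEuclideanLin F x‖
    have h0 : (0:ℝ) ≤ N * ‖x‖ := mul_nonneg hN0 (norm_nonneg x)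
    nlinarith [norm_nonneg (toEuclideanLin G x)]
  · have hdet : IsUnit Go.det := (Matrix.isUnit_iff_isUnit_det Go).mp hGo
    have hinv : Go * Go⁻¹ = 1 := Matrix.mul_nonsing_inv Go hdet
    have hc0 : (0:ℝ) ≤ N / γ := div_nonneg hN0 hγ.le
    refine lt_of_le_of_lt (norm_le_bound' (F * Go⁻¹) hc0 fun y => ?_) ((div_lt_one hγ).mpr h)
    set x : EuclideanSpace ℂ (Fin k) := toEuclideanLin Go⁻¹ y with hx
    have hyx : toEuclideanLin Go x = y := by
      rw [hx, ← tel_mul', hinv, tel_one']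
    have hGoid : ‖toEuclideanLin Go x‖ ^ 2 = γ ^ 2 * ‖x‖ ^ 2 - ‖toEuclideanLin G x‖ ^ 2 :=
      sq_norm_Go' G Go γ hfact x
    rw [hyx] at hGoid
    have happ : toEuclideanLin (F * Go⁻¹) y = toEuclideanLin F x := by rw [tel_mul']
    rw [happ]
    have hk := key x
    -- show γ * ‖F x‖ ≤ N * ‖y‖, then divide
    have hNγ2 : N ^ 2 ≤ γ ^ 2 := by nlinarith
    have hb2 : N ^ 2 * ‖toEuclideanLin G x‖ ^ 2 ≤ γ ^ 2 * ‖toEuclideanLin G x‖ ^ 2 :=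
      mul_le_mul_of_nonneg_right hNγ2 (sq_nonneg _)
    have hka : γ ^ 2 * (‖toEuclideanLin F x‖ ^ 2 + ‖toEuclideanLin G x‖ ^ 2)
        ≤ γ ^ 2 * (N ^ 2 * ‖x‖ ^ 2) := mul_le_mul_of_nonneg_left hk (sq_nonneg γ)
    have hsq : (γ * ‖toEuclideanLin F x‖) ^ 2 ≤ (N * ‖y‖) ^ 2 := by nlinarith
    have hmul : γ * ‖toEuclideanLin F x‖ ≤ N * ‖y‖ := by
      have h1 : (0:ℝ) ≤ γ * ‖toEuclideanLin F x‖ := mul_nonneg hγ.le (norm_nonneg _)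
      have h2 : (0:ℝ) ≤ N * ‖y‖ := mul_nonneg hN0 (norm_nonneg _)
      nlinarith
    rw [div_mul_eq_mul_div, le_div_iff₀ hγ]
    linarith [hmul]
end

section
/- Let F be a p×k complex matrix, G a q×k complex matrix, γ > 0 a real number, and G_o an invertible k×k complex matrix satisfying G_oᴴG_o = γ²·I − GᴴG. If ‖G‖ < γ and ‖F·G_o⁻¹‖ ≤ 1, then the stacked matrix satisfies ‖[F; G]‖ ≤ γ. -/
open Matrix

lemma dot_self_eq (n : ℕ) (v : Fin n → ℂ) :
    star v ⬝ᵥ v = ((∑ i, ‖v i‖ ^ 2 : ℝ) : ℂ) := by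
  push_cast
  simp only [dotProduct, Pi.star_apply, Complex.star_def]
  congr 1; ext i
  rw [mul_comm, Complex.mul_conj]
  norm_cast
  exact (Complex.sq_norm _).symm

lemma key_id (q k : ℕ) (G : Matrix (Fin q) (Fin k) ℂ) (γ : ℝ)
    (Go : Matrix (Fin k) (Fin k) ℂ)
    (hfact : Goᴴ * Go = ((γ : ℂ) ^ 2) • (1 : Matrix (Fin k) (Fin k) ℂ) - Gᴴ * G)
    (x : Fin k → ℂ) :
    ∑ i, ‖(Go *ᵥ x) i‖ ^ 2 = γ ^ 2 * ∑ i, ‖x i‖ ^ 2 - ∑ i, ‖(G *ᵥ x) i‖ ^ 2 := by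
  have h1 : star (Go *ᵥ x) ⬝ᵥ (Go *ᵥ x) = star x ⬝ᵥ ((Goᴴ * Go) *ᵥ x) := by
    simp [star_mulVec, dotProduct_mulVec, vecMul_vecMul]
  have h2 : star (G *ᵥ x) ⬝ᵥ (G *ᵥ x) = star x ⬝ᵥ ((Gᴴ * G) *ᵥ x) := by
    simp [star_mulVec, dotProduct_mulVec, vecMul_vecMul]
  have h3 : star x ⬝ᵥ ((Goᴴ * Go) *ᵥ x)
      = ((γ : ℂ) ^ 2) * (star x ⬝ᵥ x) - star x ⬝ᵥ ((Gᴴ * G) *ᵥ x) := by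
    rw [hfact, sub_mulVec, dotProduct_sub, smul_mulVec, one_mulVec,
      dotProduct_smul, smul_eq_mul]
  have := h1.trans h3
  rw [dot_self_eq, dot_self_eq, h2.symm.trans (dot_self_eq _ _)] at this
  exact_mod_cast this

lemma euclid_norm_sq {ι : Type*} [Fintype ι] (y : EuclideanSpace ℂ ι) :
    ‖y‖ ^ 2 = ∑ i, ‖y i‖ ^ 2 := by
  rw [EuclideanSpace.norm_eq, Real.sq_sqrt]
  positivity

/-- If `‖G‖ < γ` and `‖F G_o⁻¹‖ ≤ 1`, where `G_o` is invertible with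
`G_oᴴ G_o = γ²·I − Gᴴ G`, then `‖[F; G]‖ ≤ γ`. -/
theorem specNorm_stacked_le_of (p q k : ℕ)
    (F : Matrix (Fin p) (Fin k) ℂ) (G : Matrix (Fin q) (Fin k) ℂ)
    (γ : ℝ) (hγ : 0 < γ)
    (Go : Matrix (Fin k) (Fin k) ℂ) (hGo : IsUnit Go)
    (hfact : Goᴴ * Go = ((γ : ℂ) ^ 2) • (1 : Matrix (Fin k) (Fin k) ℂ) - Gᴴ * G)
    (hG : specNorm G < γ) (hF : specNorm (F * Go⁻¹) ≤ 1) :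
    specNorm (Matrix.fromRows F G) ≤ γ := by
  rw [specNorm]
  apply ContinuousLinearMap.opNorm_le_bound _ hγ.le
  intro x
  set v : Fin k → ℂ := (WithLp.equiv 2 (Fin k → ℂ)) x with hv
  have hxsq : ‖x‖ ^ 2 = ∑ i, ‖v i‖ ^ 2 := euclid_norm_sq x
  have hTsq : ‖LinearMap.toContinuousLinearMap (toEuclideanLin (fromRows F G)) x‖ ^ 2
      = ∑ i, ‖(F *ᵥ v) i‖ ^ 2 + ∑ i, ‖(G *ᵥ v) i‖ ^ 2 := by
    rw [LinearMap.coe_toContinuousLinearMap', euclid_norm_sq]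
    rw [Fintype.sum_sum_type]
    congr 1
  have hGoinv : Go⁻¹ * Go = 1 := nonsing_inv_mul Go ((isUnit_iff_isUnit_det Go).mp hGo)
  have hFle : ∑ i, ‖(F *ᵥ v) i‖ ^ 2 ≤ ∑ i, ‖(Go *ᵥ v) i‖ ^ 2 := by
    have key : (F * Go⁻¹) *ᵥ (Go *ᵥ v) = F *ᵥ v := by
      rw [mulVec_mulVec, Matrix.mul_assoc, hGoinv, Matrix.mul_one]
    set y : EuclideanSpace ℂ (Fin k) := (WithLp.equiv 2 (Fin k → ℂ)).symm (Go *ᵥ v)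
    have h1 : ‖LinearMap.toContinuousLinearMap (toEuclideanLin (F * Go⁻¹)) y‖
        ≤ specNorm (F * Go⁻¹) * ‖y‖ :=
      ContinuousLinearMap.le_opNorm _ y
    have h2 : specNorm (F * Go⁻¹) * ‖y‖ ≤ ‖y‖ := by
      simpa using mul_le_mul_of_nonneg_right hF (norm_nonneg y)
    have h3 : LinearMap.toContinuousLinearMap (toEuclideanLin (F * Go⁻¹)) y
        = (WithLp.equiv 2 (Fin p → ℂ)).symm (F *ᵥ v) := by
      rw [LinearMap.coe_toContinuousLinearMap']
      rw [show y = (WithLp.equiv 2 (Fin k → ℂ)).symm (Go *ᵥ v) from rfl]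
      rw [WithLp.equiv_symm_apply, toEuclideanLin_apply_piLp_toLp, key]
      rfl
    rw [h3] at h1
    have h4 := h1.trans h2
    have h5 : ∑ i, ‖(F *ᵥ v) i‖ ^ 2
        = ‖(WithLp.equiv 2 (Fin p → ℂ)).symm (F *ᵥ v)‖ ^ 2 := by rw [euclid_norm_sq]; rfl
    have h6 : ∑ i, ‖(Go *ᵥ v) i‖ ^ 2 = ‖y‖ ^ 2 := by rw [euclid_norm_sq]; rfl
    rw [h5, h6]
    exact pow_le_pow_left₀ (norm_nonneg _) h4 2
  have hkey := key_id q k G γ Go hfact v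
  have : ‖LinearMap.toContinuousLinearMap (toEuclideanLin (fromRows F G)) x‖ ^ 2
      ≤ (γ * ‖x‖) ^ 2 := by
    rw [hTsq, mul_pow, hxsq]
    nlinarith [hkey, hFle]
  nlinarith [this, norm_nonneg (LinearMap.toContinuousLinearMap (toEuclideanLin (fromRows F G)) x),
    mul_nonneg hγ.le (norm_nonneg x)]
end

section
/- Let F : 𝕋 → Matrix p k ℂ and G : 𝕋 → Matrix q k ℂ be continuous, let γ > 0, and let G_o : 𝕋 → Matrix k k ℂ be continuous with G_o(z) invertible and G_o(z)ᴴG_o(z) = γ²·I − G(z)ᴴG(z) for all z ∈ 𝕋. If ‖G‖∞ < γ and ‖F·G_o⁻¹‖∞ ≤ 1, then the stacked function satisfies ‖[F; G]‖∞ ≤ γ. -/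
open Matrix

/-- The `H∞` norm of a matrix-valued function on the unit circle:
`‖F‖∞ = sup_{z ∈ 𝕋} ‖F(z)‖`. -/
noncomputable def hinfNorm {m n : Type*} [Fintype m] [Fintype n] [DecidableEq n]
    (F : Circle → Matrix m n ℂ) : ℝ :=
  ⨆ z : Circle, specNorm (F z)

section helpers
variable {m n l : Type*} [Fintype m] [Fintype n] [Fintype l] [DecidableEq n] [DecidableEq l]

lemma teL_le (M : Matrix m n ℂ) (x : EuclideanSpace ℂ n) :
    ‖Matrix.toEuclideanLin M x‖ ≤ specNorm M * ‖x‖ := by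
  have := (LinearMap.toContinuousLinearMap (Matrix.toEuclideanLin M)).le_opNorm x
  simpa [specNorm] using this

lemma teL_mul (M : Matrix m n ℂ) (N : Matrix n l ℂ) (x : EuclideanSpace ℂ l) :
    Matrix.toEuclideanLin (M * N) x = Matrix.toEuclideanLin M (Matrix.toEuclideanLin N x) := by
  simp [Matrix.toEuclideanLin_apply, Matrix.mulVec_mulVec]

lemma continuous_specNorm : Continuous (specNorm (m := m) (n := n)) := by
  have h : Continuous (fun M : Matrix m n ℂ =>
      LinearMap.toContinuousLinearMap (Matrix.toEuclideanLin M)) :=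
    LinearMap.continuous_of_finiteDimensional
      ((LinearMap.toContinuousLinearMap : (_ →ₗ[ℂ] _) ≃ₗ[ℂ] _).toLinearMap.comp
        (Matrix.toEuclideanLin : Matrix m n ℂ ≃ₗ[ℂ] _).toLinearMap)
  exact h.norm

lemma norm_sq_eq_sum (u : EuclideanSpace ℂ m) : ‖u‖ ^ 2 = ∑ i, ‖u i‖ ^ 2 := by
  rw [EuclideanSpace.norm_eq, Real.sq_sqrt]
  positivity

end helpers

lemma key_pointwise {p q k : ℕ} (A : Matrix (Fin p) (Fin k) ℂ) (B : Matrix (Fin q) (Fin k) ℂ)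
    (C : Matrix (Fin k) (Fin k) ℂ) (hC : IsUnit C) {γ : ℝ} (hγ : 0 ≤ γ)
    (hfact : Cᴴ * C = ((γ : ℂ) ^ 2) • (1 : Matrix (Fin k) (Fin k) ℂ) - Bᴴ * B)
    (hA : specNorm (A * C⁻¹) ≤ 1) :
    specNorm (Matrix.fromRows A B) ≤ γ := by
  rw [specNorm]
  apply ContinuousLinearMap.opNorm_le_bound _ hγ
  intro x
  rw [LinearMap.coe_toContinuousLinearMap']
  set y := Matrix.toEuclideanLin C x with hy
  have hdet : IsUnit C.det := (Matrix.isUnit_iff_isUnit_det C).mp hC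
  have hAC : A = (A * C⁻¹) * C := by
    rw [Matrix.mul_assoc, Matrix.nonsing_inv_mul _ hdet, Matrix.mul_one]
  have hFx : ‖Matrix.toEuclideanLin A x‖ ≤ ‖y‖ := by
    calc ‖Matrix.toEuclideanLin A x‖ = ‖Matrix.toEuclideanLin (A * C⁻¹) y‖ := by
          rw [hy, ← teL_mul, ← hAC]
      _ ≤ specNorm (A * C⁻¹) * ‖y‖ := teL_le _ _
      _ ≤ 1 * ‖y‖ := by gcongr
      _ = ‖y‖ := one_mul _
  have hsum : ‖y‖ ^ 2 + ‖Matrix.toEuclideanLin B x‖ ^ 2 = γ ^ 2 * ‖x‖ ^ 2 := by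
    have h1 : (inner ℂ y y : ℂ) = inner ℂ x (Matrix.toEuclideanLin (Cᴴ * C) x) := by
      rw [teL_mul, Matrix.toEuclideanLin_conjTranspose_eq_adjoint,
        LinearMap.adjoint_inner_right]
    have h2 : (inner ℂ (Matrix.toEuclideanLin B x) (Matrix.toEuclideanLin B x) : ℂ)
        = inner ℂ x (Matrix.toEuclideanLin (Bᴴ * B) x) := by
      rw [teL_mul, Matrix.toEuclideanLin_conjTranspose_eq_adjoint,
        LinearMap.adjoint_inner_right]
    have e : (inner ℂ y y : ℂ) + inner ℂ (Matrix.toEuclideanLin B x) (Matrix.toEuclideanLin B x)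
        = ((γ : ℂ) ^ 2) * inner ℂ x x := by
      rw [h1, h2, ← inner_add_right, ← LinearMap.add_apply, ← map_add, hfact]
      have : ((γ : ℂ) ^ 2) • (1 : Matrix (Fin k) (Fin k) ℂ) - Bᴴ * B + Bᴴ * B
          = ((γ : ℂ) ^ 2) • (1 : Matrix (Fin k) (Fin k) ℂ) := sub_add_cancel _ _
      rw [this, _root_.map_smul, LinearMap.smul_apply, inner_smul_right]
      simp [Matrix.toEuclideanLin_apply]
    rw [inner_self_eq_norm_sq_to_K, inner_self_eq_norm_sq_to_K, inner_self_eq_norm_sq_to_K] at e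
    have e' : ((‖y‖ ^ 2 + ‖Matrix.toEuclideanLin B x‖ ^ 2 : ℝ) : ℂ)
        = ((γ ^ 2 * ‖x‖ ^ 2 : ℝ) : ℂ) := by push_cast; exact e
    exact_mod_cast e'
  have hsplit : ‖Matrix.toEuclideanLin (Matrix.fromRows A B) x‖ ^ 2
      = ‖Matrix.toEuclideanLin A x‖ ^ 2 + ‖Matrix.toEuclideanLin B x‖ ^ 2 := by
    simp [norm_sq_eq_sum, Matrix.toEuclideanLin_apply, Matrix.fromRows_mulVec,
      Fintype.sum_sum_type]
  have hfin : ‖Matrix.toEuclideanLin (Matrix.fromRows A B) x‖ ^ 2 ≤ (γ * ‖x‖) ^ 2 := by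
    rw [hsplit, mul_pow]
    nlinarith [sq_nonneg (‖Matrix.toEuclideanLin A x‖), norm_nonneg (Matrix.toEuclideanLin A x),
      norm_nonneg y]
  have := Real.sqrt_le_sqrt hfin
  rwa [Real.sqrt_sq (norm_nonneg _), Real.sqrt_sq (by positivity)] at this

/-- If `‖G‖∞ < γ` and `‖F G_o⁻¹‖∞ ≤ 1`, where pointwise `G_o(z)` is invertible with
`G_o(z)ᴴ G_o(z) = γ²·I − G(z)ᴴ G(z)`, then `‖[F; G]‖∞ ≤ γ`. -/
theorem hinfNorm_stacked_le_of (p q k : ℕ)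
    (F : Circle → Matrix (Fin p) (Fin k) ℂ) (hF : Continuous F)
    (G : Circle → Matrix (Fin q) (Fin k) ℂ) (hG : Continuous G)
    (γ : ℝ) (hγ : 0 < γ)
    (Go : Circle → Matrix (Fin k) (Fin k) ℂ) (hGoc : Continuous Go)
    (hGo : ∀ z, IsUnit (Go z))
    (hfact : ∀ z, (Go z)ᴴ * Go z
      = ((γ : ℂ) ^ 2) • (1 : Matrix (Fin k) (Fin k) ℂ) - (G z)ᴴ * G z)
    (hGlt : hinfNorm G < γ)
    (hFle : hinfNorm (fun z => F z * (Go z)⁻¹) ≤ 1) :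
    hinfNorm (fun z => Matrix.fromRows (F z) (G z)) ≤ γ := by
  have hGoinv : Continuous fun z => (Go z)⁻¹ := by
    rw [continuous_iff_continuousAt]
    intro z
    have h1 : ContinuousAt Inv.inv (Go z) :=
      continuousAt_matrix_inv (Go z)
        (NormedRing.inverse_continuousAt ((Matrix.isUnit_iff_isUnit_det _).mp (hGo z)).unit)
    exact h1.comp hGoc.continuousAt
  have hcont : Continuous fun z => specNorm (F z * (Go z)⁻¹) :=
    continuous_specNorm.comp (hF.matrix_mul hGoinv)
  have hbdd : BddAbove (Set.range fun z => specNorm (F z * (Go z)⁻¹)) :=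
    (isCompact_range hcont).bddAbove
  apply ciSup_le
  intro z
  exact key_pointwise (F z) (G z) (Go z) (hGo z) hγ.le (hfact z)
    (le_trans (le_ciSup hbdd z) hFle)
end

section
/- Let T1 : 𝕋 → Matrix q₁ p₁ ℂ and T2 : 𝕋 → Matrix q₁ p₂ ℂ be continuous. Suppose: U_i : 𝕋 → Matrix q₁ p₂ ℂ is continuous and inner; U_o : 𝕋 → Matrix p₂ p₂ ℂ is continuous, belongs to H∞, is pointwise invertible with z ↦ U_o(z)⁻¹ in H∞, and T2(z) = U_i(z)U_o(z) for all z ∈ 𝕋. Define Y := (I − U_iU_i^∼)T1. Let γ > ‖Y‖∞, and suppose Y_o : 𝕋 → Matrix p₁ p₁ ℂ is continuous, pointwise invertible, with Y_o ∈ H∞, (Y_o)⁻¹ ∈ H∞, and Y_o(z)ᴴY_o(z) = γ²·I − Y(z)ᴴY(z) for all z ∈ 𝕋. Define R := U_i^∼·T1·Y_o⁻¹ (pointwise products). If Q : 𝕋 → Matrix p₂ p₁ ℂ is continuous with Q ∈ H∞, and X := U_o·Q·Y_o⁻¹ satisfies ‖R − X‖∞ ≤ 1, then ‖T1 − T2·Q‖∞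 ≤ γ. -/
open Matrix

/-- A matrix-valued function `F` on the unit circle belongs to `H∞` if there is a
matrix-valued function `G`, continuous on the closed unit disc and analytic on the open
unit disc, with `F(z) = G(z⁻¹)` for all `z` on the circle. -/
def MemHInf {m n : Type*} (F : Circle → Matrix m n ℂ) : Prop :=
  ∃ G : ℂ → Matrix m n ℂ,
    (∀ i j, ContinuousOn (fun w => G w i j) (Metric.closedBall (0 : ℂ) 1)) ∧
    (∀ i j, AnalyticOn ℂ (fun w => G w i j) (Metric.ball (0 : ℂ) 1)) ∧
    (∀ z : Circle, F z = G ((z : ℂ)⁻¹))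

/-- The distance from `R` to `H∞` in the `‖·‖∞` norm:
`dist(R, H∞) = inf { ‖R − X‖∞ : X continuous, X ∈ H∞ }`. -/
noncomputable def distHInf {m n : Type*} [Fintype m] [Fintype n] [DecidableEq n]
    (R : Circle → Matrix m n ℂ) : ℝ :=
  sInf {c : ℝ | ∃ X : Circle → Matrix m n ℂ,
    Continuous X ∧ MemHInf X ∧ c = hinfNorm fun z => R z - X z}


section auxSpec

variable {m n k : Type*} [Fintype m] [Fintype n] [Fintype k] [DecidableEq n] [DecidableEq k]

set_option linter.unusedSectionVars false

lemma aux_inner (A : Matrix m n ℂ) (B : Matrix m k ℂ) (u : n → ℂ) (w : k → ℂ) :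
    (inner ℂ ((WithLp.equiv 2 (m → ℂ)).symm (A *ᵥ u)) ((WithLp.equiv 2 (m → ℂ)).symm (B *ᵥ w)) : ℂ)
      = star u ᵥ* (Aᴴ * B) ⬝ᵥ w := by
  rw [EuclideanSpace.inner_eq_star_dotProduct]
  simp [Matrix.star_mulVec, Matrix.dotProduct_mulVec, Matrix.vecMul_vecMul]
  rw [dotProduct_comm, dotProduct_mulVec, vecMul_vecMul]

lemma aux_normsq (A : Matrix m n ℂ) (u : n → ℂ) :
    ‖(WithLp.equiv 2 (m → ℂ)).symm (A *ᵥ u)‖ ^ 2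
      = Complex.re (star u ᵥ* (Aᴴ * A) ⬝ᵥ u) := by
  rw [← aux_inner A A u u]
  exact (inner_self_eq_norm_sq (𝕜 := ℂ) _).symm

lemma aux_normsq_id (u : n → ℂ) :
    ‖(WithLp.equiv 2 (n → ℂ)).symm u‖ ^ 2 = Complex.re (star u ⬝ᵥ u) := by
  have := aux_normsq (1 : Matrix n n ℂ) u
  simpa using this

lemma aux_mulVec_le (A : Matrix m n ℂ) (u : n → ℂ) :
    ‖(WithLp.equiv 2 (m → ℂ)).symm (A *ᵥ u)‖
      ≤ specNorm A * ‖(WithLp.equiv 2 (n → ℂ)).symm u‖ := by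
  have h := (LinearMap.toContinuousLinearMap (Matrix.toEuclideanLin A)).le_opNorm
    ((WithLp.equiv 2 (n → ℂ)).symm u)
  simpa [specNorm, WithLp.equiv_symm_apply, Matrix.toEuclideanLin_apply_piLp_toLp] using h

lemma specNorm_continuous : Continuous fun M : Matrix m n ℂ => specNorm M := by
  have h : Continuous fun M : Matrix m n ℂ =>
      (LinearMap.toContinuousLinearMap (Matrix.toEuclideanLin M) :
        EuclideanSpace ℂ n →L[ℂ] EuclideanSpace ℂ m) := by
    have := ((LinearMap.toContinuousLinearMap.toLinearMap.comp
        Matrix.toEuclideanLin.toLinearMap) :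
      Matrix m n ℂ →ₗ[ℂ] (EuclideanSpace ℂ n →L[ℂ] EuclideanSpace ℂ m)).continuous_of_finiteDimensional
    exact this
  exact continuous_norm.comp h

end auxSpec

/-- "1984" H∞ control, `T3 = I` case (Theorem 1, part 2): if `‖R − X‖∞ ≤ 1` with
`X = U_o Q Y_o⁻¹` for some `Q ∈ H∞`, then `‖T1 − T2 Q‖∞ ≤ γ`. -/
theorem hinf_1984_identity_suboptimal (q1 p1 p2 : ℕ)
    (T1 : Circle → Matrix (Fin q1) (Fin p1) ℂ) (hT1 : Continuous T1)
    (T2 : Circle → Matrix (Fin q1) (Fin p2) ℂ) (hT2 : Continuous T2)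
    (Ui : Circle → Matrix (Fin q1) (Fin p2) ℂ) (hUic : Continuous Ui)
    (hUiInner : ∀ z, (Ui z)ᴴ * Ui z = 1)
    (Uo : Circle → Matrix (Fin p2) (Fin p2) ℂ) (hUoc : Continuous Uo)
    (hUoH : MemHInf Uo) (hUoUnit : ∀ z, IsUnit (Uo z))
    (hUoInvH : MemHInf fun z => (Uo z)⁻¹)
    (hT2fact : ∀ z, T2 z = Ui z * Uo z)
    (Y : Circle → Matrix (Fin q1) (Fin p1) ℂ)
    (hY : Y = fun z => (1 - Ui z * (Ui z)ᴴ) * T1 z)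
    (γ : ℝ) (hγ : hinfNorm Y < γ)
    (Yo : Circle → Matrix (Fin p1) (Fin p1) ℂ) (hYoc : Continuous Yo)
    (hYoUnit : ∀ z, IsUnit (Yo z)) (hYoH : MemHInf Yo)
    (hYoInvH : MemHInf fun z => (Yo z)⁻¹)
    (hYofact : ∀ z, (Yo z)ᴴ * Yo z
      = ((γ : ℂ) ^ 2) • (1 : Matrix (Fin p1) (Fin p1) ℂ) - (Y z)ᴴ * Y z)
    (R : Circle → Matrix (Fin p2) (Fin p1) ℂ)
    (hR : R = fun z => (Ui z)ᴴ * T1 z * (Yo z)⁻¹)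
    (Q : Circle → Matrix (Fin p2) (Fin p1) ℂ) (hQc : Continuous Q) (hQH : MemHInf Q)
    (X : Circle → Matrix (Fin p2) (Fin p1) ℂ)
    (hX : X = fun z => Uo z * Q z * (Yo z)⁻¹)
    (hRX : hinfNorm (fun z => R z - X z) ≤ 1) :
    hinfNorm (fun z => T1 z - T2 z * Q z) ≤ γ := by
  classical
  have hγ0 : 0 ≤ γ := le_trans (Real.iSup_nonneg fun z => norm_nonneg _) hγ.le
  -- continuity of the relevant functions
  have hdetne : ∀ z, (Yo z).det ≠ 0 := fun z =>
    ((Matrix.isUnit_iff_isUnit_det _).mp (hYoUnit z)).ne_zero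
  have hYoInvc : Continuous fun z => (Yo z)⁻¹ := by
    simp only [Matrix.inv_def, Ring.inverse_eq_inv']
    exact ((hYoc.matrix_det.inv₀ hdetne).smul hYoc.matrix_adjugate :)
  have hRc : Continuous R := by
    rw [hR]; exact ((hUic.matrix_conjTranspose.matrix_mul hT1).matrix_mul hYoInvc :)
  have hXc : Continuous X := by
    rw [hX]; exact ((hUoc.matrix_mul hQc).matrix_mul hYoInvc :)
  have hDc : Continuous fun z => R z - X z := hRc.sub hXc
  have hbdd : BddAbove (Set.range fun z => specNorm (R z - X z)) :=
    (isCompact_range (specNorm_continuous.comp hDc)).bddAbove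
  have hD_le : ∀ z, specNorm (R z - X z) ≤ 1 := fun z =>
    le_trans (le_ciSup hbdd z) hRX
  -- algebraic identities
  have hYoinv : ∀ z, (Yo z)⁻¹ * Yo z = 1 := fun z =>
    Matrix.nonsing_inv_mul _ ((Matrix.isUnit_iff_isUnit_det _).mp (hYoUnit z))
  have hE : ∀ z, T1 z - T2 z * Q z = Y z + Ui z * ((R z - X z) * Yo z) := by
    intro z
    have hYz : Y z = (1 - Ui z * (Ui z)ᴴ) * T1 z := by rw [hY]
    have hRz : R z = (Ui z)ᴴ * T1 z * (Yo z)⁻¹ := by rw [hR]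
    have hXz : X z = Uo z * Q z * (Yo z)⁻¹ := by rw [hX]
    rw [hYz, hRz, hXz, hT2fact z]
    have h1 : ((Ui z)ᴴ * T1 z * (Yo z)⁻¹ - Uo z * Q z * (Yo z)⁻¹) * Yo z
        = (Ui z)ᴴ * T1 z - Uo z * Q z := by
      rw [Matrix.sub_mul, Matrix.mul_assoc ((Ui z)ᴴ * T1 z), Matrix.mul_assoc (Uo z * Q z),
        hYoinv z, Matrix.mul_one, Matrix.mul_one]
    rw [h1, Matrix.mul_sub, Matrix.sub_mul, Matrix.one_mul]
    rw [← Matrix.mul_assoc, ← Matrix.mul_assoc]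
    abel
  have hcross : ∀ z, (Y z)ᴴ * Ui z = 0 := by
    intro z
    have h0 : (1 - Ui z * (Ui z)ᴴ) * Ui z = 0 := by
      rw [Matrix.sub_mul, Matrix.one_mul, Matrix.mul_assoc, hUiInner z, Matrix.mul_one, sub_self]
    have hH : (1 - Ui z * (Ui z)ᴴ)ᴴ = 1 - Ui z * (Ui z)ᴴ := by
      simp [Matrix.conjTranspose_sub, Matrix.conjTranspose_mul]
    rw [hY]
    simp only [Matrix.conjTranspose_mul, hH]
    rw [Matrix.mul_assoc, h0, Matrix.mul_zero]
  -- pointwise norm bound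
  have hpt : ∀ z, specNorm (T1 z - T2 z * Q z) ≤ γ := by
    intro z
    refine ContinuousLinearMap.opNorm_le_bound _ hγ0 ?_
    intro x
    set u : Fin p1 → ℂ := WithLp.equiv 2 (Fin p1 → ℂ) x with hu
    have hxu : x = (WithLp.equiv 2 (Fin p1 → ℂ)).symm u := (Equiv.symm_apply_apply _ _).symm
    have happ : ∀ {q : ℕ} (M : Matrix (Fin q) (Fin p1) ℂ),
        (LinearMap.toContinuousLinearMap (Matrix.toEuclideanLin M)) x
          = (WithLp.equiv 2 (Fin q → ℂ)).symm (M *ᵥ u) := by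
      intro q M
      rw [LinearMap.coe_toContinuousLinearMap']
      conv_lhs => rw [hxu]
      exact Matrix.toEuclideanLin_apply_piLp_toLp M u
    rw [happ]
    set D := R z - X z with hD
    -- decompose E *ᵥ u
    have hEu : (T1 z - T2 z * Q z) *ᵥ u
        = Y z *ᵥ u + (Ui z * (D * Yo z)) *ᵥ u := by
      rw [hE z, Matrix.add_mulVec]
    set a := (WithLp.equiv 2 (Fin q1 → ℂ)).symm (Y z *ᵥ u) with ha
    set b := (WithLp.equiv 2 (Fin q1 → ℂ)).symm ((Ui z * (D * Yo z)) *ᵥ u) with hb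
    have hsplit : (WithLp.equiv 2 (Fin q1 → ℂ)).symm ((T1 z - T2 z * Q z) *ᵥ u) = a + b := by
      rw [hEu]; rfl
    -- cross term vanishes
    have hinner : (inner ℂ a b : ℂ) = 0 := by
      rw [ha, hb, aux_inner, ← Matrix.mul_assoc, hcross z, Matrix.zero_mul,
        Matrix.vecMul_zero, zero_dotProduct]
    have hnormsum : ‖a + b‖ ^ 2 = ‖a‖ ^ 2 + ‖b‖ ^ 2 := by
      rw [@norm_add_sq ℂ _ _ _ _ a b, hinner]
      simp
    -- ‖b‖ bound
    set v : Fin p1 → ℂ := Yo z *ᵥ u with hv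
    have hb_eq : ‖b‖ ^ 2 = ‖(WithLp.equiv 2 (Fin p2 → ℂ)).symm (D *ᵥ v)‖ ^ 2 := by
      rw [hb]
      rw [show (Ui z * (D * Yo z)) *ᵥ u = Ui z *ᵥ ((D * Yo z) *ᵥ u) from
        (Matrix.mulVec_mulVec u (Ui z) (D * Yo z)).symm]
      rw [aux_normsq, hUiInner z, Matrix.vecMul_one, ← aux_normsq_id]
      rw [show (D * Yo z) *ᵥ u = D *ᵥ v from (Matrix.mulVec_mulVec u D (Yo z)).symm]
    have hb_le : ‖b‖ ^ 2 ≤ ‖(WithLp.equiv 2 (Fin p1 → ℂ)).symm v‖ ^ 2 := by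
      rw [hb_eq]
      have h1 := aux_mulVec_le D v
      have h2 : specNorm D * ‖(WithLp.equiv 2 (Fin p1 → ℂ)).symm v‖
          ≤ 1 * ‖(WithLp.equiv 2 (Fin p1 → ℂ)).symm v‖ :=
        mul_le_mul_of_nonneg_right (hD_le z) (norm_nonneg _)
      rw [one_mul] at h2
      exact pow_le_pow_left₀ (norm_nonneg _) (h1.trans h2) 2
    -- ‖v‖² = γ²‖x‖² - ‖a‖²
    have hx_eq : ‖x‖ = ‖(WithLp.equiv 2 (Fin p1 → ℂ)).symm u‖ := by rw [hxu]
    have hv_sq : ‖(WithLp.equiv 2 (Fin p1 → ℂ)).symm v‖ ^ 2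
        = γ ^ 2 * ‖x‖ ^ 2 - ‖a‖ ^ 2 := by
      have h1 : ‖(WithLp.equiv 2 (Fin p1 → ℂ)).symm v‖ ^ 2
          = Complex.re (star u ᵥ* ((Yo z)ᴴ * Yo z) ⬝ᵥ u) := aux_normsq (Yo z) u
      rw [h1, hYofact z, ← Matrix.dotProduct_mulVec, Matrix.sub_mulVec,
        Matrix.smul_mulVec, Matrix.one_mulVec, dotProduct_sub,
        dotProduct_smul]
      have h2 : Complex.re (((γ:ℂ) ^ 2) • (star u ⬝ᵥ u)) = γ ^ 2 * ‖x‖ ^ 2 := by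
        rw [smul_eq_mul, show ((γ:ℂ) ^ 2) = ((γ ^ 2 : ℝ) : ℂ) from by push_cast; ring,
          Complex.re_ofReal_mul, hx_eq, aux_normsq_id]
      have h3 : Complex.re (star u ᵥ* ((Y z)ᴴ * Y z) ⬝ᵥ u) = ‖a‖ ^ 2 := (aux_normsq (Y z) u).symm
      rw [← Matrix.dotProduct_mulVec] at h3
      rw [Complex.sub_re, h2, h3]
    -- combine
    have hfinal_sq : ‖(WithLp.equiv 2 (Fin q1 → ℂ)).symm ((T1 z - T2 z * Q z) *ᵥ u)‖ ^ 2
        ≤ (γ * ‖x‖) ^ 2 := by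
      rw [hsplit, hnormsum]
      calc ‖a‖ ^ 2 + ‖b‖ ^ 2 ≤ ‖a‖ ^ 2 + (γ ^ 2 * ‖x‖ ^ 2 - ‖a‖ ^ 2) := by
              rw [← hv_sq]; exact add_le_add_right hb_le _
        _ = (γ * ‖x‖) ^ 2 := by ring
    have := (pow_le_pow_iff_left₀ (norm_nonneg _)
      (mul_nonneg hγ0 (norm_nonneg x)) (two_ne_zero)).mp hfinal_sq
    exact this
  exact Real.iSup_le hpt hγ0
end

section
/- Let N ≥ 1, let 𝒴₀, …, 𝒴_{N−1} be ℂ-linear subspaces of the p₂×p₁ complex matrices, and let T1 : 𝕋 → Matrix q₁ p₁ ℂ, T2 : 𝕋 → Matrix q₁ p₂ ℂ be continuous. Suppose U_i : 𝕋 → Matrix q₁ p₂ ℂ is continuous, inner, and in H∞, and U_o : 𝕋 → Matrix p₂ p₂ ℂ is continuous, in H∞, pointwise invertible with inverse in H∞, with T2 = U_i·U_o pointwise. Define Y := (I − U_iU_i^∼)T1. Suppose for every γ > ‖Y‖∞ we are given a continuous pointwise-invertible Y_{o,γ} with Y_{o,γ}, Y_{o,γ}⁻¹ ∈ H∞ and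 Y_{o,γ}ᴴY_{o,γ} = γ²·I − YᴴY pointwise; set R_γ := U_i^∼·T1·Y_{o,γ}⁻¹, and for matrices V₀, …, V_{N−1} with V(z) := Σ_{i=0}^{N−1} V_i·z^{−i}, set R̂_γ(V)(z) := z^N·R_γ(z) − U_o(z)·(z^N·V(z))·Y_{o,γ}(z)⁻¹. Then inf{‖(T1 − T2·V) − (z^{−N}·T2)·D‖∞ : V_i ∈ 𝒴_i for all i, D : 𝕋 → Matrix p₂ p₁ ℂ continuous with D ∈ H∞} = inf{γ : γ > ‖Y‖∞ and there exist V₀ ∈ 𝒴₀, …, V_{N−1} ∈ 𝒴_{N−1} with dist(R̂_γ(V), H∞) < 1}. -/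
open Matrix

set_option maxHeartbeats 1000000
set_option linter.unusedSectionVars false
namespace SpecAux

variable {l m n k : Type*} [Fintype l] [Fintype m] [Fintype n] [Fintype k]
  [DecidableEq l] [DecidableEq m] [DecidableEq n] [DecidableEq k]

lemma specNorm_nonneg (M : Matrix m n ℂ) : 0 ≤ specNorm M := norm_nonneg _

lemma norm_apply_le (M : Matrix m n ℂ) (x : EuclideanSpace ℂ n) :
    ‖Matrix.toEuclideanLin M x‖ ≤ specNorm M * ‖x‖ := by
  simpa [specNorm] using (LinearMap.toContinuousLinearMap (Matrix.toEuclideanLin M)).le_opNorm x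

lemma specNorm_le_bound {M : Matrix m n ℂ} {c : ℝ} (hc : 0 ≤ c)
    (h : ∀ x : EuclideanSpace ℂ n, ‖Matrix.toEuclideanLin M x‖ ≤ c * ‖x‖) :
    specNorm M ≤ c :=
  ContinuousLinearMap.opNorm_le_bound _ hc (by simpa using h)

lemma toEuclideanLin_mul (A : Matrix m n ℂ) (B : Matrix n l ℂ) (x : EuclideanSpace ℂ l) :
    Matrix.toEuclideanLin (A * B) x = Matrix.toEuclideanLin A (Matrix.toEuclideanLin B x) := by
  simp [Matrix.toEuclideanLin_apply, Matrix.mulVec_mulVec]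

lemma normsq_eq (A : Matrix m n ℂ) (x : EuclideanSpace ℂ n) :
    ‖Matrix.toEuclideanLin A x‖ ^ 2
      = RCLike.re (inner (𝕜 := ℂ) x (Matrix.toEuclideanLin (Aᴴ * A) x)) := by
  rw [toEuclideanLin_mul, Matrix.toEuclideanLin_conjTranspose_eq_adjoint,
    LinearMap.adjoint_inner_right, inner_self_eq_norm_sq]

lemma specNorm_smul (c : ℂ) (M : Matrix m n ℂ) : specNorm (c • M) = ‖c‖ * specNorm M := by
  unfold specNorm
  rw [_root_.map_smul, _root_.map_smul]
  exact norm_smul c (LinearMap.toContinuousLinearMap (Matrix.toEuclideanLin M))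

end SpecAux


namespace SpecAux

variable {l m n k : Type*} [Fintype l] [Fintype m] [Fintype n] [Fintype k]
  [DecidableEq l] [DecidableEq m] [DecidableEq n] [DecidableEq k]

lemma continuous_specNorm {F : Circle → Matrix m n ℂ} (hF : Continuous F) :
    Continuous fun z => specNorm (F z) := by
  have h :=
    (Matrix.toEuclideanLin.trans
      (LinearMap.toContinuousLinearMap (𝕜 := ℂ) (E := EuclideanSpace ℂ n)
        (F' := EuclideanSpace ℂ m))).toLinearMap.continuous_of_finiteDimensional
  have h2 : (fun M : Matrix m n ℂ => LinearMap.toContinuousLinearMap (Matrix.toEuclideanLin M))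
      = ⇑(Matrix.toEuclideanLin.trans (LinearMap.toContinuousLinearMap (𝕜 := ℂ)
        (E := EuclideanSpace ℂ n) (F' := EuclideanSpace ℂ m))).toLinearMap := rfl
  exact continuous_norm.comp ((h2 ▸ h : Continuous fun M : Matrix m n ℂ =>
    LinearMap.toContinuousLinearMap (Matrix.toEuclideanLin M)).comp hF)

lemma bddAbove_specNorm {F : Circle → Matrix m n ℂ} (hF : Continuous F) :
    BddAbove (Set.range fun z => specNorm (F z)) := by
  rw [← Set.image_univ]
  exact (isCompact_univ.image (continuous_specNorm hF)).bddAbove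

lemma le_hinfNorm {F : Circle → Matrix m n ℂ} (hF : Continuous F) (z : Circle) :
    specNorm (F z) ≤ hinfNorm F :=
  le_ciSup (bddAbove_specNorm hF) z

lemma hinfNorm_le {F : Circle → Matrix m n ℂ} {c : ℝ} (h : ∀ z, specNorm (F z) ≤ c) :
    hinfNorm F ≤ c :=
  ciSup_le h

lemma hinfNorm_nonneg (F : Circle → Matrix m n ℂ) : 0 ≤ hinfNorm F :=
  Real.iSup_nonneg fun _ => specNorm_nonneg _

lemma normsq_split {A : Matrix m n ℂ} {B : Matrix l n ℂ} {C : Matrix k n ℂ}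
    (h : Aᴴ * A = Bᴴ * B + Cᴴ * C) (x : EuclideanSpace ℂ n) :
    ‖Matrix.toEuclideanLin A x‖ ^ 2
      = ‖Matrix.toEuclideanLin B x‖ ^ 2 + ‖Matrix.toEuclideanLin C x‖ ^ 2 := by
  rw [normsq_eq, normsq_eq, normsq_eq, h]
  simp [inner_add_right]

lemma normsq_gamma {A : Matrix m n ℂ} {B : Matrix l n ℂ} {γ : ℝ}
    (h : Aᴴ * A = ((γ : ℂ) ^ 2) • (1 : Matrix n n ℂ) - Bᴴ * B) (x : EuclideanSpace ℂ n) :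
    ‖Matrix.toEuclideanLin A x‖ ^ 2 = γ ^ 2 * ‖x‖ ^ 2 - ‖Matrix.toEuclideanLin B x‖ ^ 2 := by
  have h1 : Matrix.toEuclideanLin (1 : Matrix n n ℂ) x = x := by
    simp [Matrix.toEuclideanLin_apply]
  have h2 : inner (𝕜 := ℂ) x x = ((‖x‖ : ℂ)) ^ 2 := inner_self_eq_norm_sq_to_K x
  rw [normsq_eq, normsq_eq, h, map_sub, _root_.map_smul]
  simp only [LinearMap.sub_apply, LinearMap.smul_apply, h1]
  rw [inner_sub_right, inner_smul_right, h2, map_sub]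
  have h3 : (γ : ℂ) ^ 2 * ((‖x‖ : ℂ)) ^ 2 = (((γ ^ 2 * ‖x‖ ^ 2 : ℝ)) : ℂ) := by push_cast; ring
  rw [show RCLike.re ((γ : ℂ) ^ 2 * ((‖x‖ : ℂ)) ^ 2) = γ ^ 2 * ‖x‖ ^ 2 by
    rw [h3]; exact Complex.ofReal_re _]

end SpecAux
namespace SpecAux

variable {l m n k : Type*} [Fintype l] [Fintype m] [Fintype n] [Fintype k]
  [DecidableEq l] [DecidableEq m] [DecidableEq n] [DecidableEq k]

lemma le_of_sq_le_sq' {a b : ℝ} (ha : 0 ≤ a) (hb : 0 ≤ b) (h : a ^ 2 ≤ b ^ 2) : a ≤ b := by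
  nlinarith [sq_nonneg (a + b)]

/-- If `AᴴA = MᴴM + YᴴY` then `specNorm Y ≤ specNorm A`. -/
lemma specNorm_le_of_split {A : Matrix m n ℂ} {M : Matrix l n ℂ} {Y : Matrix k n ℂ}
    (h : Aᴴ * A = Mᴴ * M + Yᴴ * Y) : specNorm Y ≤ specNorm A := by
  refine specNorm_le_bound (specNorm_nonneg A) fun x => ?_
  have h1 := normsq_split h x
  have h2 := norm_apply_le A x
  nlinarith [norm_nonneg (Matrix.toEuclideanLin Y x), norm_nonneg (Matrix.toEuclideanLin A x),
    norm_nonneg (Matrix.toEuclideanLin M x), norm_nonneg x, specNorm_nonneg A]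

/-- Direction 1: if `specNorm (M * Yo⁻¹) ≤ 1` then `specNorm A ≤ γ`. -/
lemma specNorm_le_gamma {A : Matrix m n ℂ} {M : Matrix l n ℂ} {Y : Matrix k n ℂ}
    {Yo : Matrix n n ℂ} {γ : ℝ} (hγ : 0 ≤ γ)
    (h : Aᴴ * A = Mᴴ * M + Yᴴ * Y)
    (hYo : Yoᴴ * Yo = ((γ : ℂ) ^ 2) • (1 : Matrix n n ℂ) - Yᴴ * Y)
    (hYu : IsUnit Yo)
    (hle : specNorm (M * Yo⁻¹) ≤ 1) : specNorm A ≤ γ := by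
  refine specNorm_le_bound hγ fun x => ?_
  have hdet : IsUnit Yo.det := (Matrix.isUnit_iff_isUnit_det Yo).mp hYu
  have hMx : Matrix.toEuclideanLin M x
      = Matrix.toEuclideanLin (M * Yo⁻¹) (Matrix.toEuclideanLin Yo x) := by
    rw [← toEuclideanLin_mul, Matrix.mul_assoc, Matrix.nonsing_inv_mul Yo hdet, Matrix.mul_one]
  have h1 := normsq_split h x
  have h2 := normsq_gamma hYo x
  have h3 : ‖Matrix.toEuclideanLin M x‖ ≤ 1 * ‖Matrix.toEuclideanLin Yo x‖ := by
    rw [hMx]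
    calc ‖Matrix.toEuclideanLin (M * Yo⁻¹) (Matrix.toEuclideanLin Yo x)‖
        ≤ specNorm (M * Yo⁻¹) * ‖Matrix.toEuclideanLin Yo x‖ := norm_apply_le _ _
      _ ≤ 1 * ‖Matrix.toEuclideanLin Yo x‖ :=
          mul_le_mul_of_nonneg_right hle (norm_nonneg _)
  refine le_of_sq_le_sq' (norm_nonneg _) (mul_nonneg hγ (norm_nonneg x)) ?_
  have h3' : ‖Matrix.toEuclideanLin M x‖ ^ 2 ≤ ‖Matrix.toEuclideanLin Yo x‖ ^ 2 := by
    nlinarith [norm_nonneg (Matrix.toEuclideanLin M x), norm_nonneg (Matrix.toEuclideanLin Yo x)]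
  rw [mul_pow]
  nlinarith

/-- Direction 2: if `specNorm A ≤ c < γ` then `specNorm (M * Yo⁻¹) ≤ c / γ`. -/
lemma specNorm_div_le {A : Matrix m n ℂ} {M : Matrix l n ℂ} {Y : Matrix k n ℂ}
    {Yo : Matrix n n ℂ} {γ c : ℝ} (hc : 0 ≤ c) (hcγ : c < γ)
    (h : Aᴴ * A = Mᴴ * M + Yᴴ * Y)
    (hYo : Yoᴴ * Yo = ((γ : ℂ) ^ 2) • (1 : Matrix n n ℂ) - Yᴴ * Y)
    (hYu : IsUnit Yo)
    (hA : specNorm A ≤ c) : specNorm (M * Yo⁻¹) ≤ c / γ := by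
  have hγ : 0 < γ := lt_of_le_of_lt hc hcγ
  refine specNorm_le_bound (div_nonneg hc hγ.le) fun y => ?_
  have hdet : IsUnit Yo.det := (Matrix.isUnit_iff_isUnit_det Yo).mp hYu
  set x := Matrix.toEuclideanLin Yo⁻¹ y with hx
  have hMy : Matrix.toEuclideanLin (M * Yo⁻¹) y = Matrix.toEuclideanLin M x := by
    rw [hx, ← toEuclideanLin_mul]
  have hyx : Matrix.toEuclideanLin Yo x = y := by
    rw [hx, ← toEuclideanLin_mul, Matrix.mul_nonsing_inv Yo hdet]
    simp [Matrix.toEuclideanLin_apply]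
  have h1 := normsq_split h x
  have h2 := normsq_gamma hYo x
  rw [hyx] at h2
  have h3 : ‖Matrix.toEuclideanLin A x‖ ≤ c * ‖x‖ := by
    calc ‖Matrix.toEuclideanLin A x‖ ≤ specNorm A * ‖x‖ := norm_apply_le _ _
      _ ≤ c * ‖x‖ := mul_le_mul_of_nonneg_right hA (norm_nonneg _)
  -- ‖y‖ ≤ γ * ‖x‖
  have h4 : ‖y‖ ^ 2 ≤ γ ^ 2 * ‖x‖ ^ 2 := by
    nlinarith [norm_nonneg (Matrix.toEuclideanLin Y x)]
  -- ‖M x‖² ≤ ‖y‖² - (γ² - c²) ‖x‖² ≤ (c/γ)² ‖y‖²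
  rw [hMy]
  have h5 : ‖Matrix.toEuclideanLin M x‖ ^ 2 ≤ (c / γ) ^ 2 * ‖y‖ ^ 2 := by
    have e1 : ‖Matrix.toEuclideanLin M x‖ ^ 2 ≤ ‖y‖ ^ 2 - (γ ^ 2 - c ^ 2) * ‖x‖ ^ 2 := by
      nlinarith [norm_nonneg (Matrix.toEuclideanLin A x), norm_nonneg x,
        norm_nonneg (Matrix.toEuclideanLin Y x)]
    have e2 : (γ ^ 2 - c ^ 2) * (‖y‖ ^ 2 / γ ^ 2) ≤ (γ ^ 2 - c ^ 2) * ‖x‖ ^ 2 := by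
      apply mul_le_mul_of_nonneg_left _ (by nlinarith)
      rw [div_le_iff₀ (by positivity)]
      nlinarith
    have e3 : (c / γ) ^ 2 * ‖y‖ ^ 2 = ‖y‖ ^ 2 - (γ ^ 2 - c ^ 2) * (‖y‖ ^ 2 / γ ^ 2) := by
      field_simp
      ring
    nlinarith
  refine le_of_sq_le_sq' (norm_nonneg _)
    (mul_nonneg (div_nonneg hc hγ.le) (norm_nonneg y)) ?_
  rw [mul_pow]
  exact h5

end SpecAux
namespace SpecAux

variable {l m n k : Type*} [Fintype l] [Fintype m] [Fintype n] [Fintype k]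
  [DecidableEq l] [DecidableEq m] [DecidableEq n] [DecidableEq k]

lemma continuous_matrix_inv {F : Circle → Matrix n n ℂ} (hF : Continuous F)
    (hu : ∀ z, IsUnit (F z)) : Continuous fun z => (F z)⁻¹ := by
  have hne : ∀ z, (F z).det ≠ 0 := fun z =>
    ((Matrix.isUnit_iff_isUnit_det (F z)).mp (hu z)).ne_zero
  have : (fun z => (F z)⁻¹) = fun z => (F z).det⁻¹ • (F z).adjugate := by
    funext z; rw [Matrix.inv_def, Ring.inverse_eq_inv']
  rw [this]
  exact (hF.matrix_det.inv₀ hne).smul hF.matrix_adjugate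

end SpecAux

lemma memHInf_zero {m n : Type*} : MemHInf (fun _ : Circle => (0 : Matrix m n ℂ)) :=
  ⟨fun _ => 0, fun i j => continuousOn_const, fun i j => analyticOn_const, fun _ => rfl⟩

lemma MemHInf.mul {l m n : Type*} [Fintype n]
    {F : Circle → Matrix m n ℂ} {G : Circle → Matrix n l ℂ}
    (hF : MemHInf F) (hG : MemHInf G) : MemHInf fun z => F z * G z := by
  obtain ⟨P, hPc, hPa, hPe⟩ := hF
  obtain ⟨Q, hQc, hQa, hQe⟩ := hG
  refine ⟨fun w => P w * Q w, fun i j => ?_, fun i j => ?_, fun z => by simp only []; rw [hPe, hQe]⟩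
  · simp only [Matrix.mul_apply]
    exact continuousOn_finset_sum _ fun c _ => (hPc i c).mul (hQc c j)
  · simp only [Matrix.mul_apply]
    exact Finset.analyticOn_fun_sum _ fun c _ => (hPa i c).mul (hQa c j)

namespace SpecAux

variable {l m n k : Type*} [Fintype l] [Fintype m] [Fintype n] [Fintype k]
  [DecidableEq l] [DecidableEq m] [DecidableEq n] [DecidableEq k]

lemma distHInf_bddBelow (R : Circle → Matrix m n ℂ) :
    BddBelow {c : ℝ | ∃ X : Circle → Matrix m n ℂ,
      Continuous X ∧ MemHInf X ∧ c = hinfNorm fun z => R z - X z} := by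
  refine ⟨0, ?_⟩
  rintro c ⟨X, -, -, rfl⟩
  exact hinfNorm_nonneg _

lemma distHInf_le {R X : Circle → Matrix m n ℂ} (hXc : Continuous X) (hXH : MemHInf X) :
    distHInf R ≤ hinfNorm fun z => R z - X z :=
  csInf_le (distHInf_bddBelow R) ⟨X, hXc, hXH, rfl⟩

lemma exists_of_distHInf_lt {R : Circle → Matrix m n ℂ} {a : ℝ} (h : distHInf R < a) :
    ∃ X : Circle → Matrix m n ℂ, Continuous X ∧ MemHInf X ∧
      (hinfNorm fun z => R z - X z) < a := by
  have hne : {c : ℝ | ∃ X : Circle → Matrix m n ℂ,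
      Continuous X ∧ MemHInf X ∧ c = hinfNorm fun z => R z - X z}.Nonempty :=
    ⟨_, fun _ => 0, continuous_const, memHInf_zero, rfl⟩
  obtain ⟨c, hc, hca⟩ := (csInf_lt_iff (distHInf_bddBelow R) hne).mp h
  obtain ⟨X, h1, h2, rfl⟩ := hc
  exact ⟨X, h1, h2, hca⟩

end SpecAux
namespace SpecAux

variable {l m n k : Type*} [Fintype l] [Fintype m] [Fintype n] [Fintype k]
  [DecidableEq l] [DecidableEq m] [DecidableEq n] [DecidableEq k]

lemma a_decomp (Ui : Matrix m n ℂ) (T1 : Matrix m l ℂ) (G : Matrix n l ℂ) :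
    T1 - Ui * G = Ui * (Uiᴴ * T1 - G) + (1 - Ui * Uiᴴ) * T1 := by
  simp only [Matrix.mul_sub, Matrix.sub_mul, Matrix.one_mul, ← Matrix.mul_assoc]
  abel

lemma uy_zero (Ui : Matrix m n ℂ) (T1 : Matrix m l ℂ) (hU : Uiᴴ * Ui = 1) :
    Uiᴴ * ((1 - Ui * Uiᴴ) * T1) = 0 := by
  rw [← Matrix.mul_assoc, Matrix.mul_sub, Matrix.mul_one, ← Matrix.mul_assoc, hU,
    Matrix.one_mul, sub_self, Matrix.zero_mul]

lemma expand_split (U : Matrix m n ℂ) (M : Matrix n l ℂ) (Y : Matrix m l ℂ)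
    (hU : Uᴴ * U = 1) (hUY : Uᴴ * Y = 0) :
    (U * M + Y)ᴴ * (U * M + Y) = Mᴴ * M + Yᴴ * Y := by
  have hYU : Yᴴ * U = 0 := by
    have h := congrArg Matrix.conjTranspose hUY
    simpa [Matrix.conjTranspose_mul] using h
  simp only [Matrix.conjTranspose_add, Matrix.conjTranspose_mul, Matrix.add_mul, Matrix.mul_add]
  rw [Matrix.mul_assoc Mᴴ Uᴴ (U * M), ← Matrix.mul_assoc Uᴴ U M, hU, Matrix.one_mul,
    Matrix.mul_assoc Mᴴ Uᴴ Y, hUY, Matrix.mul_zero, ← Matrix.mul_assoc Yᴴ U M, hYU,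
    Matrix.zero_mul]
  abel

lemma total_split (Ui : Matrix m n ℂ) (T1 : Matrix m l ℂ) (G : Matrix n l ℂ)
    (hU : Uiᴴ * Ui = 1) :
    (T1 - Ui * G)ᴴ * (T1 - Ui * G)
      = (Uiᴴ * T1 - G)ᴴ * (Uiᴴ * T1 - G) + ((1 - Ui * Uiᴴ) * T1)ᴴ * ((1 - Ui * Uiᴴ) * T1) := by
  rw [a_decomp Ui T1 G]
  exact expand_split _ _ _ hU (uy_zero _ _ hU)

lemma aG_eq (Ui : Matrix m n ℂ) (Uo : Matrix n n ℂ) (T1 : Matrix m l ℂ)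
    (S D : Matrix n l ℂ) (w : ℂ) :
    T1 - (Ui * Uo) * S - (w • (Ui * Uo)) * D = T1 - Ui * (Uo * S + w • (Uo * D)) := by
  simp only [Matrix.mul_add, Matrix.smul_mul, Matrix.mul_smul, Matrix.mul_assoc,
    mul_smul_comm, smul_mul_assoc]
  abel

lemma rhat_eq {N : ℕ} {w : ℂ} (hw : w ≠ 0) (Ut : Matrix n l ℂ) (Uo : Matrix n n ℂ)
    (S D : Matrix n l ℂ) (Yi : Matrix l l ℂ) :
    w ^ N • ((Ut - (Uo * S + (w⁻¹) ^ N • (Uo * D))) * Yi)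
      = w ^ N • (Ut * Yi) - Uo * (w ^ N • S) * Yi - Uo * D * Yi := by
  have hww : w ^ N * w⁻¹ ^ N = 1 := by
    rw [← mul_pow, mul_inv_cancel₀ hw, one_pow]
  simp only [Matrix.sub_mul, Matrix.add_mul, Matrix.smul_mul, Matrix.mul_smul, smul_mul_assoc,
    mul_smul_comm, smul_sub, smul_add, smul_smul, hww, one_smul, Matrix.mul_assoc]
  abel

end SpecAux

open SpecAux

/-- Distributed H∞ control subject to delays, `T3 = I` case (Theorem 3, part 1):
`inf { ‖(T1 − T2 V) − (z^{−N} T2) D‖∞ : V_i ∈ 𝒴_i, D ∈ H∞ }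
  = inf { γ : γ > ‖Y‖∞ and ∃ V_i ∈ 𝒴_i with dist(R̂_γ(V), H∞) < 1 }`. -/
theorem distributed_hinf_identity_optimal (N : ℕ) (hN : 1 ≤ N) (q1 p1 p2 : ℕ)
    (𝒴 : Fin N → Submodule ℂ (Matrix (Fin p2) (Fin p1) ℂ))
    (T1 : Circle → Matrix (Fin q1) (Fin p1) ℂ) (hT1 : Continuous T1)
    (T2 : Circle → Matrix (Fin q1) (Fin p2) ℂ) (hT2 : Continuous T2)
    (Ui : Circle → Matrix (Fin q1) (Fin p2) ℂ) (hUic : Continuous Ui)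
    (hUiInner : ∀ z, (Ui z)ᴴ * Ui z = 1) (hUiH : MemHInf Ui)
    (Uo : Circle → Matrix (Fin p2) (Fin p2) ℂ) (hUoc : Continuous Uo)
    (hUoH : MemHInf Uo) (hUoUnit : ∀ z, IsUnit (Uo z))
    (hUoInvH : MemHInf fun z => (Uo z)⁻¹)
    (hT2fact : ∀ z, T2 z = Ui z * Uo z)
    (Y : Circle → Matrix (Fin q1) (Fin p1) ℂ)
    (hY : Y = fun z => (1 - Ui z * (Ui z)ᴴ) * T1 z)
    (Yo : ℝ → Circle → Matrix (Fin p1) (Fin p1) ℂ)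
    (hYoc : ∀ γ, hinfNorm Y < γ → Continuous (Yo γ))
    (hYoUnit : ∀ γ, hinfNorm Y < γ → ∀ z, IsUnit (Yo γ z))
    (hYoH : ∀ γ, hinfNorm Y < γ → MemHInf (Yo γ))
    (hYoInvH : ∀ γ, hinfNorm Y < γ → MemHInf fun z => (Yo γ z)⁻¹)
    (hYofact : ∀ γ, hinfNorm Y < γ → ∀ z, (Yo γ z)ᴴ * Yo γ z
      = ((γ : ℂ) ^ 2) • (1 : Matrix (Fin p1) (Fin p1) ℂ) - (Y z)ᴴ * Y z)
    (R : ℝ → Circle → Matrix (Fin p2) (Fin p1) ℂ)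
    (hR : R = fun γ z => (Ui z)ᴴ * T1 z * (Yo γ z)⁻¹)
    (Rhat : ℝ → (Fin N → Matrix (Fin p2) (Fin p1) ℂ) →
      Circle → Matrix (Fin p2) (Fin p1) ℂ)
    (hRhat : Rhat = fun γ V (z : Circle) =>
      ((z : ℂ) ^ N) • R γ z
        - Uo z * (((z : ℂ) ^ N) • ∑ i : Fin N, ((z : ℂ)⁻¹) ^ (i : ℕ) • V i)
          * (Yo γ z)⁻¹) :
    sInf {c : ℝ | ∃ V : Fin N → Matrix (Fin p2) (Fin p1) ℂ, (∀ i, V i ∈ 𝒴 i) ∧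
        ∃ D : Circle → Matrix (Fin p2) (Fin p1) ℂ, Continuous D ∧ MemHInf D ∧
          c = hinfNorm fun z : Circle =>
            (T1 z - T2 z * ∑ i : Fin N, ((z : ℂ)⁻¹) ^ (i : ℕ) • V i)
              - (((z : ℂ)⁻¹ ^ N) • T2 z) * D z}
      = sInf {γ : ℝ | hinfNorm Y < γ ∧
          ∃ V : Fin N → Matrix (Fin p2) (Fin p1) ℂ, (∀ i, V i ∈ 𝒴 i) ∧
            distHInf (Rhat γ V) < 1} := by
  classical
  have hYdef : ∀ z, Y z = (1 - Ui z * (Ui z)ᴴ) * T1 z := fun z => by rw [hY]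
  have hY0 : (0 : ℝ) ≤ hinfNorm Y := hinfNorm_nonneg Y
  have hcoe : Continuous fun z : Circle => (z : ℂ) := continuous_subtype_val
  have hcoeinv : Continuous fun z : Circle => ((z : ℂ))⁻¹ :=
    hcoe.inv₀ fun z => Circle.coe_ne_zero z
  have hs1 : ∀ (z : Circle) (B : Matrix (Fin p2) (Fin p1) ℂ),
      specNorm (((z : ℂ) ^ N) • B) = specNorm B := by
    intro z B
    rw [specNorm_smul]
    simp [norm_pow, Circle.norm_coe]
  -- continuity of the polynomial part
  have hScont : ∀ V : Fin N → Matrix (Fin p2) (Fin p1) ℂ,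
      Continuous fun z : Circle => ∑ i : Fin N, ((z : ℂ)⁻¹) ^ (i : ℕ) • V i :=
    fun V => continuous_finset_sum _ fun i _ => (hcoeinv.pow _).smul continuous_const
  -- the pointwise factorization identity
  have hsplit : ∀ (V : Fin N → Matrix (Fin p2) (Fin p1) ℂ)
      (D : Circle → Matrix (Fin p2) (Fin p1) ℂ) (z : Circle),
      ((T1 z - T2 z * ∑ i : Fin N, ((z : ℂ)⁻¹) ^ (i : ℕ) • V i)
          - (((z : ℂ)⁻¹ ^ N) • T2 z) * D z)ᴴ *
        ((T1 z - T2 z * ∑ i : Fin N, ((z : ℂ)⁻¹) ^ (i : ℕ) • V i)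
          - (((z : ℂ)⁻¹ ^ N) • T2 z) * D z)
      = ((Ui z)ᴴ * T1 z - (Uo z * (∑ i : Fin N, ((z : ℂ)⁻¹) ^ (i : ℕ) • V i)
            + ((z : ℂ)⁻¹ ^ N) • (Uo z * D z)))ᴴ *
          ((Ui z)ᴴ * T1 z - (Uo z * (∑ i : Fin N, ((z : ℂ)⁻¹) ^ (i : ℕ) • V i)
            + ((z : ℂ)⁻¹ ^ N) • (Uo z * D z)))
        + (Y z)ᴴ * Y z := by
    intro V D z
    have h1 : (T1 z - T2 z * ∑ i : Fin N, ((z : ℂ)⁻¹) ^ (i : ℕ) • V i)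
          - (((z : ℂ)⁻¹ ^ N) • T2 z) * D z
        = T1 z - Ui z * (Uo z * (∑ i : Fin N, ((z : ℂ)⁻¹) ^ (i : ℕ) • V i)
            + ((z : ℂ)⁻¹ ^ N) • (Uo z * D z)) := by
      rw [hT2fact z]
      exact aG_eq (Ui z) (Uo z) (T1 z) _ (D z) _
    rw [h1, hYdef z]
    exact total_split (Ui z) (T1 z) _ (hUiInner z)
  -- the pointwise identity for `R̂_γ(V) - U_o D Y_o⁻¹`
  have key2 : ∀ (γ : ℝ) (V : Fin N → Matrix (Fin p2) (Fin p1) ℂ)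
      (D : Circle → Matrix (Fin p2) (Fin p1) ℂ) (z : Circle),
      Rhat γ V z - Uo z * D z * (Yo γ z)⁻¹
        = ((z : ℂ) ^ N) •
          (((Ui z)ᴴ * T1 z - (Uo z * (∑ i : Fin N, ((z : ℂ)⁻¹) ^ (i : ℕ) • V i)
              + ((z : ℂ)⁻¹ ^ N) • (Uo z * D z))) * (Yo γ z)⁻¹) := by
    intro γ V D z
    have hw : (z : ℂ) ≠ 0 := Circle.coe_ne_zero z
    simp only [hRhat, hR]
    exact (rhat_eq hw _ _ _ _ _).symm
  -- bounded below facts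
  have hbddL : BddBelow {c : ℝ | ∃ V : Fin N → Matrix (Fin p2) (Fin p1) ℂ,
      (∀ i, V i ∈ 𝒴 i) ∧
      ∃ D : Circle → Matrix (Fin p2) (Fin p1) ℂ, Continuous D ∧ MemHInf D ∧
        c = hinfNorm fun z : Circle =>
          (T1 z - T2 z * ∑ i : Fin N, ((z : ℂ)⁻¹) ^ (i : ℕ) • V i)
            - (((z : ℂ)⁻¹ ^ N) • T2 z) * D z} := by
    refine ⟨0, ?_⟩
    rintro c ⟨V, hV, D, hDc, hDH, rfl⟩
    exact hinfNorm_nonneg _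
  have hbddR : BddBelow {γ : ℝ | hinfNorm Y < γ ∧
      ∃ V : Fin N → Matrix (Fin p2) (Fin p1) ℂ, (∀ i, V i ∈ 𝒴 i) ∧
        distHInf (Rhat γ V) < 1} := by
    refine ⟨0, ?_⟩
    rintro γ ⟨hγ, -⟩
    exact le_of_lt (lt_of_le_of_lt hY0 hγ)
  -- the generic membership lemma for the right-hand set
  have keyB : ∀ (V : Fin N → Matrix (Fin p2) (Fin p1) ℂ), (∀ i, V i ∈ 𝒴 i) →
      ∀ (D : Circle → Matrix (Fin p2) (Fin p1) ℂ), Continuous D → MemHInf D →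
      ∀ (c γ : ℝ), 0 ≤ c → c < γ → hinfNorm Y < γ →
      (∀ z, specNorm ((T1 z - T2 z * ∑ i : Fin N, ((z : ℂ)⁻¹) ^ (i : ℕ) • V i)
          - (((z : ℂ)⁻¹ ^ N) • T2 z) * D z) ≤ c) →
      γ ∈ {γ : ℝ | hinfNorm Y < γ ∧
        ∃ V : Fin N → Matrix (Fin p2) (Fin p1) ℂ, (∀ i, V i ∈ 𝒴 i) ∧
          distHInf (Rhat γ V) < 1} := by
    intro V hV D hDc hDH c γ hc0 hcγ hγY hA
    have hγ0 : (0 : ℝ) < γ := lt_of_le_of_lt hc0 hcγ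
    have hXc : Continuous fun z => Uo z * D z * (Yo γ z)⁻¹ :=
      (hUoc.matrix_mul hDc).matrix_mul
        (continuous_matrix_inv (hYoc γ hγY) (hYoUnit γ hγY))
    have hXH : MemHInf fun z => Uo z * D z * (Yo γ z)⁻¹ :=
      (hUoH.mul hDH).mul (hYoInvH γ hγY)
    refine ⟨hγY, V, hV, ?_⟩
    have hd1 : distHInf (Rhat γ V)
        ≤ hinfNorm fun z => Rhat γ V z - Uo z * D z * (Yo γ z)⁻¹ :=
      distHInf_le hXc hXH
    have hd2 : (hinfNorm fun z => Rhat γ V z - Uo z * D z * (Yo γ z)⁻¹) ≤ c / γ := by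
      refine hinfNorm_le fun z => ?_
      rw [key2 γ V D z, hs1]
      exact specNorm_div_le hc0 hcγ (hsplit V D z) (hYofact γ hγY z) (hYoUnit γ hγY z) (hA z)
    have : distHInf (Rhat γ V) ≤ c / γ := le_trans hd1 hd2
    exact lt_of_le_of_lt this ((div_lt_one hγ0).mpr hcγ)
  -- nonemptiness of the right-hand set, via a large γ₀
  set C : ℝ := max (hinfNorm T1) (hinfNorm Y) with hC
  have hC0 : 0 ≤ C := le_trans hY0 (le_max_right _ _)
  have hγ₀mem : (C + 1) ∈ {γ : ℝ | hinfNorm Y < γ ∧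
      ∃ V : Fin N → Matrix (Fin p2) (Fin p1) ℂ, (∀ i, V i ∈ 𝒴 i) ∧
        distHInf (Rhat γ V) < 1} := by
    refine keyB 0 (fun i => (𝒴 i).zero_mem) (fun _ => 0) continuous_const memHInf_zero
      C (C + 1) hC0 (by linarith) (lt_of_le_of_lt (le_max_right _ _) (by linarith)) ?_
    intro z
    have e : (T1 z - T2 z * ∑ i : Fin N, ((z : ℂ)⁻¹) ^ (i : ℕ) • (0 : Fin N →
          Matrix (Fin p2) (Fin p1) ℂ) i)
        - (((z : ℂ)⁻¹ ^ N) • T2 z) * (fun _ : Circle => (0 : Matrix (Fin p2) (Fin p1) ℂ)) z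
        = T1 z := by
      simp
    rw [e]
    exact le_trans (le_hinfNorm hT1 z) (le_max_left _ _)
  -- main antisymmetry
  refine le_antisymm (le_csInf ⟨C + 1, hγ₀mem⟩ ?_) (le_csInf ?_ ?_)
  · -- every element γ of the RHS set dominates sInf LHS
    rintro γ ⟨hγY, V, hV, hdist⟩
    have hγ0 : (0 : ℝ) ≤ γ := le_trans hY0 hγY.le
    obtain ⟨X, hXc, hXH, hs⟩ := exists_of_distHInf_lt hdist
    set D : Circle → Matrix (Fin p2) (Fin p1) ℂ :=
      fun z => (Uo z)⁻¹ * X z * Yo γ z with hD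
    have hDc : Continuous D :=
      ((continuous_matrix_inv hUoc hUoUnit).matrix_mul hXc).matrix_mul (hYoc γ hγY)
    have hDH : MemHInf D := (hUoInvH.mul hXH).mul (hYoH γ hγY)
    have hXeq : ∀ z, Uo z * D z * (Yo γ z)⁻¹ = X z := by
      intro z
      have hdet := (Matrix.isUnit_iff_isUnit_det _).mp (hUoUnit z)
      have hdetYo := (Matrix.isUnit_iff_isUnit_det _).mp (hYoUnit γ hγY z)
      have h1 : Uo z * ((Uo z)⁻¹ * X z * Yo γ z) = X z * Yo γ z := by
        rw [← Matrix.mul_assoc, ← Matrix.mul_assoc, Matrix.mul_nonsing_inv _ hdet,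
          Matrix.one_mul]
      rw [hD]
      simp only []
      rw [h1, Matrix.mul_assoc, Matrix.mul_nonsing_inv _ hdetYo, Matrix.mul_one]
    have hkey : ∀ z, Rhat γ V z - X z
        = ((z : ℂ) ^ N) •
          (((Ui z)ᴴ * T1 z - (Uo z * (∑ i : Fin N, ((z : ℂ)⁻¹) ^ (i : ℕ) • V i)
              + ((z : ℂ)⁻¹ ^ N) • (Uo z * D z))) * (Yo γ z)⁻¹) := by
      intro z
      rw [← hXeq z]
      exact key2 γ V D z
    have hMfc : Continuous fun z : Circle =>
        ((z : ℂ) ^ N) •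
          (((Ui z)ᴴ * T1 z - (Uo z * (∑ i : Fin N, ((z : ℂ)⁻¹) ^ (i : ℕ) • V i)
              + ((z : ℂ)⁻¹ ^ N) • (Uo z * D z))) * (Yo γ z)⁻¹) := by
      refine (hcoe.pow N).smul ?_
      refine Continuous.matrix_mul ?_ (continuous_matrix_inv (hYoc γ hγY) (hYoUnit γ hγY))
      refine (hUic.matrix_conjTranspose.matrix_mul hT1).sub ?_
      exact (hUoc.matrix_mul (hScont V)).add ((hcoeinv.pow N).smul (hUoc.matrix_mul hDc))
    have hRXc : Continuous fun z => Rhat γ V z - X z := by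
      have : (fun z => Rhat γ V z - X z) = fun z : Circle =>
          ((z : ℂ) ^ N) •
            (((Ui z)ᴴ * T1 z - (Uo z * (∑ i : Fin N, ((z : ℂ)⁻¹) ^ (i : ℕ) • V i)
                + ((z : ℂ)⁻¹ ^ N) • (Uo z * D z))) * (Yo γ z)⁻¹) := funext hkey
      rw [this]
      exact hMfc
    have hle1 : ∀ z : Circle, specNorm
        (((Ui z)ᴴ * T1 z - (Uo z * (∑ i : Fin N, ((z : ℂ)⁻¹) ^ (i : ℕ) • V i)
              + ((z : ℂ)⁻¹ ^ N) • (Uo z * D z))) * (Yo γ z)⁻¹) ≤ 1 := by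
      intro z
      calc specNorm (((Ui z)ᴴ * T1 z - (Uo z * (∑ i : Fin N, ((z : ℂ)⁻¹) ^ (i : ℕ) • V i)
              + ((z : ℂ)⁻¹ ^ N) • (Uo z * D z))) * (Yo γ z)⁻¹)
          = specNorm (((z : ℂ) ^ N) •
              (((Ui z)ᴴ * T1 z - (Uo z * (∑ i : Fin N, ((z : ℂ)⁻¹) ^ (i : ℕ) • V i)
                + ((z : ℂ)⁻¹ ^ N) • (Uo z * D z))) * (Yo γ z)⁻¹)) := (hs1 z _).symm
        _ = specNorm (Rhat γ V z - X z) := by rw [hkey z]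
        _ ≤ hinfNorm fun z => Rhat γ V z - X z := le_hinfNorm hRXc z
        _ ≤ 1 := hs.le
    have hcle : (hinfNorm fun z : Circle =>
        (T1 z - T2 z * ∑ i : Fin N, ((z : ℂ)⁻¹) ^ (i : ℕ) • V i)
          - (((z : ℂ)⁻¹ ^ N) • T2 z) * D z) ≤ γ := by
      refine hinfNorm_le fun z => ?_
      exact specNorm_le_gamma hγ0 (hsplit V D z) (hYofact γ hγY z) (hYoUnit γ hγY z) (hle1 z)
    refine le_trans (csInf_le hbddL ⟨V, hV, D, hDc, hDH, rfl⟩) hcle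
  · -- the LHS set is nonempty
    exact ⟨_, 0, fun i => (𝒴 i).zero_mem, fun _ => 0, continuous_const, memHInf_zero, rfl⟩
  · -- every element c of the LHS set dominates sInf RHS
    rintro c ⟨V, hV, D, hDc, hDH, rfl⟩
    have hAc : Continuous fun z : Circle =>
        (T1 z - T2 z * ∑ i : Fin N, ((z : ℂ)⁻¹) ^ (i : ℕ) • V i)
          - (((z : ℂ)⁻¹ ^ N) • T2 z) * D z :=
      (hT1.sub (hT2.matrix_mul (hScont V))).sub
        (((hcoeinv.pow N).smul hT2).matrix_mul hDc)
    have hc0 : (0 : ℝ) ≤ hinfNorm fun z : Circle =>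
        (T1 z - T2 z * ∑ i : Fin N, ((z : ℂ)⁻¹) ^ (i : ℕ) • V i)
          - (((z : ℂ)⁻¹ ^ N) • T2 z) * D z := hinfNorm_nonneg _
    have hYle : hinfNorm Y ≤ hinfNorm fun z : Circle =>
        (T1 z - T2 z * ∑ i : Fin N, ((z : ℂ)⁻¹) ^ (i : ℕ) • V i)
          - (((z : ℂ)⁻¹ ^ N) • T2 z) * D z := by
      refine hinfNorm_le fun z => ?_
      exact le_trans (specNorm_le_of_split (hsplit V D z)) (le_hinfNorm hAc z)
    have hstep : ∀ γ : ℝ, (hinfNorm fun z : Circle =>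
        (T1 z - T2 z * ∑ i : Fin N, ((z : ℂ)⁻¹) ^ (i : ℕ) • V i)
          - (((z : ℂ)⁻¹ ^ N) • T2 z) * D z) < γ →
        sInf {γ : ℝ | hinfNorm Y < γ ∧
          ∃ V : Fin N → Matrix (Fin p2) (Fin p1) ℂ, (∀ i, V i ∈ 𝒴 i) ∧
            distHInf (Rhat γ V) < 1} ≤ γ := by
      intro γ hγ
      refine csInf_le hbddR ?_
      exact keyB V hV D hDc hDH _ γ hc0 hγ (lt_of_le_of_lt hYle hγ)
        (fun z => le_hinfNorm hAc z)
    by_contra hcon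
    push_neg at hcon
    set cv := hinfNorm fun z : Circle =>
        (T1 z - T2 z * ∑ i : Fin N, ((z : ℂ)⁻¹) ^ (i : ℕ) • V i)
          - (((z : ℂ)⁻¹ ^ N) • T2 z) * D z
    set sv := sInf {γ : ℝ | hinfNorm Y < γ ∧
          ∃ V : Fin N → Matrix (Fin p2) (Fin p1) ℂ, (∀ i, V i ∈ 𝒴 i) ∧
            distHInf (Rhat γ V) < 1}
    have h1 : cv < (cv + sv) / 2 := by linarith
    have h2 := hstep ((cv + sv) / 2) h1
    linarith
end
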